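/- Let $\mathbb{K}$ be an algebraically closed field of characteristic $p > n > 1$ (or characteristic $0$), and let $z_1, \dots, z_n$ be algebraically independent over the prime field. Then the polynomial $\frac{\partial}{\partial x} \prod_{i=1}^n (x - z_i) = n x^{n-1} - (n-1)\left(\sum_i z_i\right) x^{n-2} + \cdots$ is irreducible over the field $\mathbb{K}(z_1, \dots, z_n)$. -/

import Mathlib

open Polynomial

noncomputable def pswap (S : Type*) [CommRing S] :
    Polynomial (Polynomial S) →+* Polynomial (Polynomial S) :=
  eval₂RingHom (eval₂RingHom (C.comp C) X) (C X)

@[simp] lemma pswap_X (S : Type*) [CommRing S] : pswap S X = C X :=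
  eval₂_X _ _

@[simp] lemma pswap_C (S : Type*) [CommRing S] (p : Polynomial S) :
    pswap S (C p) = eval₂ (C.comp C) X p :=
  eval₂_C _ _

@[simp] lemma pswap_CC (S : Type*) [CommRing S] (s : S) :
    pswap S (C (C s)) = C (C s) := by
  simp [pswap_C, eval₂_C]

@[simp] lemma pswap_C_X (S : Type*) [CommRing S] : pswap S (C X) = X := by
  simp [pswap_C]

lemma pswap_comp_pswap (S : Type*) [CommRing S] :
    (pswap S).comp (pswap S) = RingHom.id _ := by
  apply Polynomial.ringHom_ext'
  · apply Polynomial.ringHom_ext' <;> simp [RingHom.comp_assoc]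
    · ext s <;> simp
  · simp

lemma pswap_pswap (S : Type*) [CommRing S] (p : Polynomial (Polynomial S)) :
    pswap S (pswap S p) = p :=
  DFunLike.congr_fun (pswap_comp_pswap S) p

noncomputable def pswapEquiv (S : Type*) [CommRing S] :
    Polynomial (Polynomial S) ≃+* Polynomial (Polynomial S) :=
  RingEquiv.ofRingHom (pswap S) (pswap S) (pswap_comp_pswap S) (pswap_comp_pswap S)

lemma pswap_map_C (S : Type*) [CommRing S] (p : Polynomial S) :
    pswap S (p.map C) = C p := by
  have h : (pswap S).comp (mapRingHom C) = (C : Polynomial S →+* _) := by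
    apply Polynomial.ringHom_ext'
    · ext s <;> simp
    · simp
  simpa using DFunLike.congr_fun h p
open Polynomial

section
variable (K : Type*) [Field K] (q m : ℕ) [CharP K q]

lemma Q_monic (S : Type*) [CommRing S] (z : Fin m → S) :
    (∏ i : Fin m, (X - C (z i))).Monic :=
  monic_prod_of_monic _ _ fun i _ => monic_X_sub_C _

lemma Q_natDegree (S : Type*) [CommRing S] [Nontrivial S] (z : Fin m → S) :
    (∏ i : Fin m, (X - C (z i))).natDegree = m := by
  rw [natDegree_prod_of_monic _ _ fun i _ => monic_X_sub_C _]
  simp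

lemma cast_ne_zero_of (hm : 1 ≤ m) (hq : q = 0 ∨ m < q) : (m : K) ≠ 0 := by
  rcases hq with h | h
  · subst h
    haveI := CharP.charP_to_charZero K
    exact_mod_cast (by omega : m ≠ 0)
  · intro hc
    rw [CharP.cast_eq_zero_iff K q] at hc
    exact absurd (Nat.le_of_dvd (by omega) hc) (by omega)

lemma cast_ne_zero_mv (hm : 1 ≤ m) (hq : q = 0 ∨ m < q) (σ : Type*) :
    (m : MvPolynomial σ K) ≠ 0 := by
  intro h
  apply cast_ne_zero_of K q m hm hq
  simpa using congrArg (MvPolynomial.eval (fun _ => (0:K))) h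

lemma Q_deriv_coeff (S : Type*) [CommRing S] [Nontrivial S] (hm : 1 ≤ m) (z : Fin m → S) :
    (derivative (∏ i : Fin m, (X - C (z i)))).coeff (m - 1) = (m : S) := by
  set Q : Polynomial S := ∏ i : Fin m, (X - C (z i)) with hQ
  rw [coeff_derivative]
  have h1 : m - 1 + 1 = m := by omega
  have h2 : Q.coeff m = 1 := by
    have h3 := (Q_monic m S z).coeff_natDegree
    rwa [Q_natDegree m S z] at h3
  rw [h1, h2, one_mul]
  rw [Nat.cast_sub hm]
  push_cast
  ring

end

set_option synthInstance.maxHeartbeats 1000000 in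
set_option maxHeartbeats 1000000 in
lemma g_irreducible (K : Type*) [Field K] (q m : ℕ) [CharP K q]
    (hm : 1 ≤ m) (hq : q = 0 ∨ m < q)
    (Q : Polynomial (MvPolynomial (Fin m) K))
    (hQ : Q = ∏ i : Fin m, (X - C (MvPolynomial.X i))) :
    Irreducible ((C (Q + X * derivative Q) - X * C (derivative Q) :
      Polynomial (Polynomial (MvPolynomial (Fin m) K)))) := by
  set S := MvPolynomial (Fin m) K
  set B : Polynomial S := derivative Q with hB
  set A : Polynomial S := Q + X * B with hA
  set g : Polynomial (Polynomial S) := C A - X * C B with hg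
  have hQmonic : Q.Monic := hQ ▸ Q_monic m S _
  have hQdeg : Q.natDegree = m := hQ ▸ Q_natDegree m S _
  have hBne : B ≠ 0 := by
    intro h
    have hc := Q_deriv_coeff m S hm (fun i => MvPolynomial.X i)
    rw [← hQ, ← hB, h, coeff_zero] at hc
    exact cast_ne_zero_mv K q m hm hq (Fin m) hc.symm
  -- separability over the fraction field L of S
  set L := FractionRing S
  have hι : Function.Injective (algebraMap S L) := IsFractionRing.injective S L
  have hsep : (Q.map (algebraMap S L)).Separable := by
    rw [hQ, Polynomial.map_prod]
    simp only [Polynomial.map_sub, Polynomial.map_X, Polynomial.map_C]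
    exact Polynomial.separable_prod_X_sub_C_iff.mpr
      (fun i j hij => MvPolynomial.X_injective (hι hij))
  have hcop : IsCoprime (Q.map (algebraMap S L)) (B.map (algebraMap S L)) := by
    have h2 := hsep
    rw [Polynomial.Separable, derivative_map] at h2
    rw [hB]
    exact h2
  -- primitivity of g
  have hprim : g.IsPrimitive := by
    intro t ht
    have hco := (Polynomial.C_dvd_iff_dvd_coeff t g).mp ht
    have h0 : t ∣ A := by
      have := hco 0
      simpa [hg, mul_coeff_zero] using this
    have h1 : t ∣ B := by
      have hc1 : g.coeff 1 = -B := by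
        simp [hg, coeff_X_mul, coeff_C]
      exact dvd_neg.mp (hc1 ▸ hco 1)
    have hQdvd : t ∣ Q := by
      have hid : Q = A - X * B := by rw [hA]; ring
      rw [hid]
      exact dvd_sub h0 (h1.mul_left X)
    have hunit : IsUnit (t.map (algebraMap S L)) :=
      hcop.isUnit_of_dvd' (map_dvd (mapRingHom (algebraMap S L)) hQdvd)
        (map_dvd (mapRingHom (algebraMap S L)) h1)
    have hdeg : t.natDegree = 0 := by
      have := natDegree_eq_zero_of_isUnit hunit
      rwa [natDegree_map_eq_of_injective hι] at this
    have hts : t = C (t.coeff 0) := (eq_C_of_natDegree_eq_zero hdeg)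
    rw [hts, isUnit_C]
    rw [hts] at hQdvd
    have hdv := (Polynomial.C_dvd_iff_dvd_coeff (t.coeff 0) Q).mp hQdvd m
    have hlc : Q.coeff m = 1 := by
      have h2 : Q.coeff m = Q.leadingCoeff := by
        rw [Polynomial.leadingCoeff, hQdeg]
      rw [h2, hQmonic.leadingCoeff]
    exact isUnit_of_dvd_one (hlc ▸ hdv)
  -- irreducibility over Frac (S[X])
  have hι' : Function.Injective (algebraMap (Polynomial S) (FractionRing (Polynomial S))) :=
    IsFractionRing.injective _ _
  have hmapped : g.map (algebraMap (Polynomial S) (FractionRing (Polynomial S))) =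
      C (algebraMap (Polynomial S) (FractionRing (Polynomial S)) (-B)) * X
        + C (algebraMap (Polynomial S) (FractionRing (Polynomial S)) A) := by
    simp only [hg, Polynomial.map_sub, Polynomial.map_mul, Polynomial.map_X, Polynomial.map_C,
      map_neg]
    ring
  have hirr_map : Irreducible
      (g.map (algebraMap (Polynomial S) (FractionRing (Polynomial S)))) := by
    apply irreducible_of_degree_eq_one
    rw [hmapped]
    apply degree_linear
    intro h
    exact hBne (by simpa using hι' (h.trans (map_zero _).symm))
  exact hprim.irreducible_of_irreducible_map_of_injective hι' hirr_map

set_option maxHeartbeats 1000000 in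
set_option synthInstance.maxHeartbeats 1000000 in
/-- Over an algebraically closed field `K` of characteristic `0` or `p > n`, with
`z_1, …, z_n` algebraically independent (realized as the generators of the field
of rational functions `K(z_1, …, z_n)`), the polynomial
`∂/∂x ∏_{i=1}^n (x - z_i)` is irreducible over `K(z_1, …, z_n)`. -/
theorem stmt_13 (K : Type*) [Field K] [IsAlgClosed K] (q n : ℕ) [CharP K q]
    (hn : 1 < n) (hq : q = 0 ∨ n < q) :
    Irreducible (Polynomial.derivative (∏ i : Fin n,
      ((X : Polynomial (FractionRing (MvPolynomial (Fin n) K))) -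
        C (algebraMap (MvPolynomial (Fin n) K)
            (FractionRing (MvPolynomial (Fin n) K)) (MvPolynomial.X i))))) := by
  obtain ⟨m, rfl⟩ : ∃ m, n = m + 1 := ⟨n - 1, by omega⟩
  have hm : 1 ≤ m := by omega
  set p₀ : Polynomial (MvPolynomial (Fin (m + 1)) K) :=
    ∏ i : Fin (m + 1), (X - C (MvPolynomial.X i)) with hp₀
  set f₀ : Polynomial (MvPolynomial (Fin (m + 1)) K) := derivative p₀ with hf₀
  have hgoal : (∏ i : Fin (m + 1),
      ((X : Polynomial (FractionRing (MvPolynomial (Fin (m + 1)) K)))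
        - C (algebraMap (MvPolynomial (Fin (m + 1)) K)
            (FractionRing (MvPolynomial (Fin (m + 1)) K)) (MvPolynomial.X i))))
      = p₀.map (algebraMap (MvPolynomial (Fin (m + 1)) K)
          (FractionRing (MvPolynomial (Fin (m + 1)) K))) := by
    rw [hp₀, Polynomial.map_prod]
    simp
  rw [hgoal, derivative_map]
  -- Gauss's lemma (hard direction) to reduce to irreducibility over R
  letI : NormalizationMonoid (MvPolynomial (Fin (m + 1)) K) :=
    UniqueFactorizationMonoid.normalizationMonoid.toNormalizationMonoid
  letI : NormalizedGCDMonoid (MvPolynomial (Fin (m + 1)) K) :=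
    UniqueFactorizationMonoid.toNormalizedGCDMonoid (MvPolynomial (Fin (m + 1)) K)
  have hcoeff : f₀.coeff m = ((m + 1 : ℕ) : MvPolynomial (Fin (m + 1)) K) := by
    have h1 := Q_deriv_coeff (m + 1) (MvPolynomial (Fin (m + 1)) K) (by omega)
      (fun i => MvPolynomial.X i)
    rw [← hp₀, ← hf₀] at h1
    simpa using h1
  have hunit : IsUnit (((m + 1 : ℕ) : MvPolynomial (Fin (m + 1)) K)) := by
    have h1 : ((m + 1 : ℕ) : K) ≠ 0 := cast_ne_zero_of K q (m + 1) (by omega) hq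
    have h2 := (isUnit_iff_ne_zero.mpr h1).map (algebraMap K (MvPolynomial (Fin (m + 1)) K))
    rwa [map_natCast] at h2
  have hprim : f₀.IsPrimitive := by
    intro t ht
    have h1 := (Polynomial.C_dvd_iff_dvd_coeff t f₀).mp ht m
    rw [hcoeff] at h1
    exact isUnit_of_dvd_unit h1 hunit
  rw [← hprim.irreducible_iff_irreducible_map_fraction_map
    (K := FractionRing (MvPolynomial (Fin (m + 1)) K))]
  -- transfer to S[X][Y] via finSuccEquiv and pswap
  set e₁ : MvPolynomial (Fin (m + 1)) K ≃+* Polynomial (MvPolynomial (Fin m) K) :=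
    (MvPolynomial.finSuccEquiv K m).toRingEquiv with he₁
  set Q : Polynomial (MvPolynomial (Fin m) K) :=
    ∏ i : Fin m, (X - C (MvPolynomial.X i)) with hQ
  set Φ : Polynomial (MvPolynomial (Fin (m + 1)) K)
      ≃+* Polynomial (Polynomial (MvPolynomial (Fin m) K)) :=
    (Polynomial.mapEquiv e₁).trans (pswapEquiv (MvPolynomial (Fin m) K)) with hΦdef
  have hmap_p₀ : p₀.map (e₁ : MvPolynomial (Fin (m + 1)) K →+* Polynomial (MvPolynomial (Fin m) K))
      = (X - C Polynomial.X) * (Q.map Polynomial.C) := by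
    rw [hp₀, Polynomial.map_prod, Fin.prod_univ_succ, hQ, Polynomial.map_prod]
    congr 1
    · rw [Polynomial.map_sub, Polynomial.map_X, Polynomial.map_C]
      exact congrArg (fun a => X - C a) (MvPolynomial.finSuccEquiv_X_zero (R := K) (n := m))
    · apply Finset.prod_congr rfl
      intro i _
      simp only [Polynomial.map_sub, Polynomial.map_X, Polynomial.map_C]
      exact congrArg (fun a => X - C a) (MvPolynomial.finSuccEquiv_X_succ (R := K) (n := m))
  have hΦf : Φ f₀ = C (Q + X * derivative Q) - X * C (derivative Q) := by
    have h1 : Φ f₀ = pswap (MvPolynomial (Fin m) K)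
        (f₀.map (e₁ : MvPolynomial (Fin (m + 1)) K →+* Polynomial (MvPolynomial (Fin m) K))) := rfl
    have h2 : f₀.map (e₁ : MvPolynomial (Fin (m + 1)) K →+* Polynomial (MvPolynomial (Fin m) K))
        = Q.map Polynomial.C + (X - C Polynomial.X) * derivative (Q.map Polynomial.C) := by
      rw [hf₀, ← derivative_map, hmap_p₀, derivative_mul]
      simp
    have hps : pswap (MvPolynomial (Fin m) K)
        ((X : Polynomial (Polynomial (MvPolynomial (Fin m) K))) - C X) = C X - X := by
      rw [map_sub, pswap_X, pswap_C_X]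
    rw [h1, h2]
    simp only [map_add, map_mul, derivative_map, pswap_map_C, hps]
    ring
  have hgirr := g_irreducible K q m hm (by omega : q = 0 ∨ m < q) Q hQ
  rw [← hΦf] at hgirr
  exact (MulEquiv.irreducible_iff (Φ : Polynomial (MvPolynomial (Fin (m + 1)) K)
    ≃* Polynomial (Polynomial (MvPolynomial (Fin m) K)))).mp hgirr
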